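/- For each natural number n, there exist nonempty compact totally disconnected (zero-dimensional) metric spaces E and H and a continuous surjection f : E → H which is isometrically containing for the class 𝒟_n of non-expanding surjections between metric spaces having at most n points and diameter at most 1. -/

import Mathlib

set_option maxHeartbeats 1000000
set_option maxHeartbeats 1000000

open Set Metric Filter Topology

noncomputable section ZDAux

noncomputable instance zcMS : MetricSpace (ℕ → Bool) := PiNat.metricSpace

noncomputable def zdDigit (y : ℝ) (t : ℕ) : Bool := decide (⌊y * 2 ^ (t+1)⌋ % 2 = 1)

lemma zdfloor_succ (y : ℝ) (t : ℕ) :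
    ⌊y * 2 ^ (t+1)⌋ = 2 * ⌊y * 2 ^ t⌋ + ⌊y * 2 ^ (t+1)⌋ % 2 := by
  have hpow : (2:ℝ) ^ (t+1) = 2 ^ t * 2 := pow_succ 2 t
  have h1 : ((2 * ⌊y * 2 ^ t⌋ : ℤ) : ℝ) ≤ y * 2 ^ (t+1) := by
    have := Int.floor_le (y * 2 ^ t)
    push_cast
    rw [hpow]
    nlinarith
  have h2 : y * 2 ^ (t+1) < ((2 * ⌊y * 2 ^ t⌋ + 2 : ℤ) : ℝ) := by
    have := Int.lt_floor_add_one (y * 2 ^ t)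
    push_cast
    rw [hpow]
    nlinarith
  have h3 : 2 * ⌊y * 2 ^ t⌋ ≤ ⌊y * 2 ^ (t+1)⌋ := Int.le_floor.2 h1
  have h4 : ⌊y * 2 ^ (t+1)⌋ < 2 * ⌊y * 2 ^ t⌋ + 2 := Int.floor_lt.2 h2
  omega

lemma zdfloor_eq {y z : ℝ} (hy : y ∈ Ico (0:ℝ) 1) (hz : z ∈ Ico (0:ℝ) 1) (m : ℕ)
    (h : ∀ q < m, zdDigit y q = zdDigit z q) : ⌊y * 2 ^ m⌋ = ⌊z * 2 ^ m⌋ := by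
  induction m with
  | zero =>
    simp only [pow_zero, mul_one]
    rw [Int.floor_eq_zero_iff.2 (by exact ⟨hy.1, by simpa using hy.2⟩),
      Int.floor_eq_zero_iff.2 (by exact ⟨hz.1, by simpa using hz.2⟩)]
  | succ t ih =>
    have hd : zdDigit y t = zdDigit z t := h t (Nat.lt_succ_self t)
    have hpar : ⌊y * 2 ^ (t+1)⌋ % 2 = ⌊z * 2 ^ (t+1)⌋ % 2 := by
      simp only [zdDigit, decide_eq_decide] at hd
      omega
    rw [zdfloor_succ y t, zdfloor_succ z t, ih (fun q hq => h q (hq.trans (Nat.lt_succ_self t))),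
      hpar]

lemma zd_close {y z : ℝ} (hy : y ∈ Ico (0:ℝ) 1) (hz : z ∈ Ico (0:ℝ) 1) {m : ℕ}
    (h : ∀ q < m, zdDigit y q = zdDigit z q) : |y - z| ≤ (1/2 : ℝ) ^ m := by
  have hf := zdfloor_eq hy hz m h
  have h1 := Int.floor_le (y * 2 ^ m)
  have h2 := Int.lt_floor_add_one (y * 2 ^ m)
  have h3 := Int.floor_le (z * 2 ^ m)
  have h4 := Int.lt_floor_add_one (z * 2 ^ m)
  rw [hf] at h1 h2
  have hp : (0:ℝ) < 2 ^ m := by positivity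
  rw [abs_sub_le_iff]
  constructor <;> · rw [div_pow, one_pow, le_div_iff₀ hp]; nlinarith

abbrev ZMat (n : ℕ) := Fin (n+1) → Fin (n+1) → ℝ

noncomputable def zidx (n : ℕ) : (Fin (n+1) × Fin (n+1) × ℕ) ≃ ℕ :=
  letI : Denumerable (Fin (n+1) × Fin (n+1) × ℕ) := Denumerable.ofEncodableOfInfinite _
  Denumerable.eqv _

noncomputable def zphi (n : ℕ) (D : ZMat n) : ℕ → Bool := fun t =>
  zdDigit (D ((zidx n).symm t).1 ((zidx n).symm t).2.1 / 2) ((zidx n).symm t).2.2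

lemma zphi_apply (n : ℕ) (D : ZMat n) (i j : Fin (n+1)) (q : ℕ) :
    zphi n D (zidx n (i, j, q)) = zdDigit (D i j / 2) q := by
  simp [zphi]

def zA (n : ℕ) : Set (ZMat n) := Set.pi univ fun _ => Set.pi univ fun _ => Icc (0:ℝ) 1

lemma zA_mem {n : ℕ} {D : ZMat n} (h : ∀ i j, D i j ∈ Icc (0:ℝ) 1) : D ∈ zA n := by
  intro i _
  intro j _
  exact h i j

lemma zA_compact (n : ℕ) : IsCompact (zA n) :=
  isCompact_univ_pi fun _ => isCompact_univ_pi fun _ => isCompact_Icc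

def zP (n : ℕ) : Set (ZMat n × (ℕ → Bool)) := closure ((fun D => (D, zphi n D)) '' zA n)

lemma zP_compact (n : ℕ) : IsCompact (zP n) := by
  have h1 : IsCompact ((zA n) ×ˢ (univ : Set (ℕ → Bool))) :=
    (zA_compact n).prod isCompact_univ
  refine h1.of_isClosed_subset isClosed_closure (closure_minimal ?_ h1.isClosed)
  rintro _ ⟨D, hD, rfl⟩
  exact ⟨hD, mem_univ _⟩

lemma zP_graph {n : ℕ} {D D' : ZMat n} {c : ℕ → Bool}
    (h : (D, c) ∈ zP n) (h' : (D', c) ∈ zP n) : D = D' := by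
  obtain ⟨u, hu, hul⟩ := mem_closure_iff_seq_limit.1 h
  obtain ⟨v, hv, hvl⟩ := mem_closure_iff_seq_limit.1 h'
  choose E hEA hEeq using hu
  choose F hFA hFeq using hv
  have huE : Tendsto E atTop (𝓝 D) := by
    have h0 := (continuous_fst.tendsto (D, c)).comp hul
    have : Prod.fst ∘ u = E := funext fun t => by
      simp only [Function.comp_apply, ← hEeq t]
    rwa [this] at h0
  have hvF : Tendsto F atTop (𝓝 D') := by
    have h0 := (continuous_fst.tendsto (D', c)).comp hvl
    have : Prod.fst ∘ v = F := funext fun t => by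
      simp only [Function.comp_apply, ← hFeq t]
    rwa [this] at h0
  have huφ : Tendsto (fun t => zphi n (E t)) atTop (𝓝 c) := by
    have h0 := (continuous_snd.tendsto (D, c)).comp hul
    have : Prod.snd ∘ u = fun t => zphi n (E t) := funext fun t => by
      simp only [Function.comp_apply, ← hEeq t]
    rwa [this] at h0
  have hvφ : Tendsto (fun t => zphi n (F t)) atTop (𝓝 c) := by
    have h0 := (continuous_snd.tendsto (D', c)).comp hvl
    have : Prod.snd ∘ v = fun t => zphi n (F t) := funext fun t => by
      simp only [Function.comp_apply, ← hFeq t]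
    rwa [this] at h0
  funext i j
  have hEij : Tendsto (fun t => E t i j) atTop (𝓝 (D i j)) :=
    (((continuous_apply j).tendsto (D i)).comp (((continuous_apply i).tendsto D).comp huE))
  have hFij : Tendsto (fun t => F t i j) atTop (𝓝 (D' i j)) :=
    (((continuous_apply j).tendsto (D' i)).comp (((continuous_apply i).tendsto D').comp hvF))
  have key : ∀ m : ℕ, dist (D i j) (D' i j) ≤ 2 * (1/2 : ℝ) ^ m := by
    intro m
    have hdigE : ∀ q : ℕ, ∀ᶠ t in atTop, zdDigit (E t i j / 2) q = c (zidx n (i, j, q)) := by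
      intro q
      have h1 : Tendsto (fun t => zphi n (E t) (zidx n (i, j, q))) atTop
          (𝓝 (c (zidx n (i, j, q)))) := ((continuous_apply _).tendsto c).comp huφ
      rw [nhds_discrete Bool, tendsto_pure] at h1
      simpa only [zphi_apply] using h1
    have hdigF : ∀ q : ℕ, ∀ᶠ t in atTop, zdDigit (F t i j / 2) q = c (zidx n (i, j, q)) := by
      intro q
      have h1 : Tendsto (fun t => zphi n (F t) (zidx n (i, j, q))) atTop
          (𝓝 (c (zidx n (i, j, q)))) := ((continuous_apply _).tendsto c).comp hvφ
      rw [nhds_discrete Bool, tendsto_pure] at h1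
      simpa only [zphi_apply] using h1
    have hallE : ∀ᶠ t in atTop, ∀ q ∈ Finset.range m,
        zdDigit (E t i j / 2) q = c (zidx n (i, j, q)) :=
      (eventually_all_finset _).2 fun q _ => hdigE q
    have hallF : ∀ᶠ t in atTop, ∀ q ∈ Finset.range m,
        zdDigit (F t i j / 2) q = c (zidx n (i, j, q)) :=
      (eventually_all_finset _).2 fun q _ => hdigF q
    have hd : ∀ᶠ t in atTop, dist (E t i j) (F t i j) ≤ 2 * (1/2 : ℝ) ^ m := by
      filter_upwards [hallE, hallF] with t htE htF
      have hyz : ∀ q < m, zdDigit (E t i j / 2) q = zdDigit (F t i j / 2) q := by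
        intro q hq
        rw [htE q (Finset.mem_range.2 hq), htF q (Finset.mem_range.2 hq)]
      have hEm := hEA t i (mem_univ i) j (mem_univ j)
      have hFm := hFA t i (mem_univ i) j (mem_univ j)
      have hy : E t i j / 2 ∈ Ico (0:ℝ) 1 := ⟨by linarith [hEm.1], by linarith [hEm.2]⟩
      have hz : F t i j / 2 ∈ Ico (0:ℝ) 1 := ⟨by linarith [hFm.1], by linarith [hFm.2]⟩
      have hcl := zd_close hy hz hyz
      have hsub : E t i j / 2 - F t i j / 2 = (E t i j - F t i j) / 2 := by ring
      rw [hsub, abs_div, abs_two, div_le_iff₀ (by norm_num : (0:ℝ) < 2)] at hcl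
      rw [Real.dist_eq]
      linarith
    exact le_of_tendsto (hEij.dist hFij) hd
  have hlim : Tendsto (fun m : ℕ => 2 * (1/2 : ℝ) ^ m) atTop (𝓝 0) := by
    simpa using (tendsto_pow_atTop_nhds_zero_of_lt_one (by norm_num : (0:ℝ) ≤ 1/2)
      (by norm_num)).const_mul 2
  have : dist (D i j) (D' i j) ≤ 0 := ge_of_tendsto hlim (Eventually.of_forall key)
  exact dist_le_zero.1 this

def zS (n : ℕ) : Set ((Fin (n+1) → ℝ) × (ℕ → Bool)) :=
  ⋃ i : Fin (n+1), (fun p : ZMat n × (ℕ → Bool) => (p.1 i, p.2)) '' zP n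

lemma zS_compact (n : ℕ) : IsCompact (zS n) := by
  refine isCompact_iUnion fun i => (zP_compact n).image ?_
  exact (continuous_apply i).comp continuous_fst |>.prodMk continuous_snd

lemma zS_nonempty (n : ℕ) : (zS n).Nonempty := by
  have h0 : (0 : ZMat n) ∈ zA n := zA_mem fun i j => ⟨le_refl _, zero_le_one⟩
  exact ⟨((0 : ZMat n) 0, zphi n 0), mem_iUnion.2 ⟨0, ⟨(0, zphi n 0),
    subset_closure ⟨0, h0, rfl⟩, rfl⟩⟩⟩

lemma subsingleton_of_finite_preconnected {X : Type*} [TopologicalSpace X] [T2Space X]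
    {t : Set X} (ht : t.Finite) (hc : IsPreconnected t) : t.Subsingleton := by
  haveI := ht.to_subtype
  haveI : DiscreteTopology t := Finite.instDiscreteTopology
  haveI : PreconnectedSpace t := Subtype.preconnectedSpace hc
  have h1 : (univ : Set t).Subsingleton :=
    (isTotallyDisconnected_of_totallyDisconnectedSpace (univ : Set t)) univ Subset.rfl
      isPreconnected_univ
  intro a ha b hb
  have := h1 (mem_univ (⟨a, ha⟩ : t)) (mem_univ (⟨b, hb⟩ : t))
  exact congrArg Subtype.val this

lemma zS_TD (n : ℕ) : IsTotallyDisconnected (zS n) := by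
  intro t hts hconn
  rcases t.eq_empty_or_nonempty with rfl | ⟨x, hx⟩
  · exact subsingleton_empty
  have hsnd : (Prod.snd '' t).Subsingleton :=
    (hconn.image _ continuous_snd.continuousOn).subsingleton
  have hc : ∀ z ∈ t, z.2 = x.2 := fun z hz => hsnd ⟨z, hz, rfl⟩ ⟨x, hx, rfl⟩
  obtain ⟨i₀, p, hpP, hpx⟩ : ∃ i₀ p, p ∈ zP n ∧ (p.1 i₀, p.2) = x := by
    have := hts hx
    simpa only [zS, mem_iUnion, mem_image] using this
  have hFfin : (range fun i : Fin (n+1) => ((p.1 i, x.2) :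
      (Fin (n+1) → ℝ) × (ℕ → Bool))).Finite := finite_range _
  have hsub : t ⊆ range fun i : Fin (n+1) => ((p.1 i, x.2) :
      (Fin (n+1) → ℝ) × (ℕ → Bool)) := by
    intro z hz
    obtain ⟨i', q, hqP, hqz⟩ : ∃ i' q, q ∈ zP n ∧ (q.1 i', q.2) = z := by
      have := hts hz
      simpa only [zS, mem_iUnion, mem_image] using this
    have hq2 : q.2 = x.2 := by rw [← hc z hz, ← hqz]
    have hp2 : p.2 = x.2 := by rw [← hpx]
    have hqP' : (q.1, x.2) ∈ zP n := by rwa [← hq2, Prod.mk.eta]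
    have hpP' : (p.1, x.2) ∈ zP n := by rwa [← hp2, Prod.mk.eta]
    have : q.1 = p.1 := zP_graph hqP' hpP'
    exact ⟨i', by rw [← hqz, this, hq2]⟩
  have ht : t.Finite := hFfin.subset hsub
  exact subsingleton_of_finite_preconnected ht hconn

end ZDAux

lemma zS_embed (n : ℕ) (K : Type) [MetricSpace K] [Finite K] [Nonempty K]
    (hcard : Nat.card K ≤ n + 1) (hdiam : Metric.diam (univ : Set K) ≤ 1) :
    ∃ ι : K → ((Fin (n+1) → ℝ) × (ℕ → Bool)),
      (∀ k, ι k ∈ zS n) ∧ ∀ k k', dist (ι k) (ι k') = dist k k' := by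
  have hpos : 0 < Nat.card K := Nat.card_pos
  let φK : K ≃ Fin (Nat.card K) := Finite.equivFin K
  let e : Fin (n+1) → K := fun i => φK.symm ⟨min i (Nat.card K - 1), by omega⟩
  have hesurj : Function.Surjective e := by
    intro k
    have hlt : (φK k : ℕ) < Nat.card K := (φK k).isLt
    refine ⟨⟨(φK k : ℕ), by omega⟩, ?_⟩
    have h3 : (⟨min ((⟨(φK k : ℕ), by omega⟩ : Fin (n+1)) : ℕ) (Nat.card K - 1), by omega⟩ :
        Fin (Nat.card K)) = φK k := Fin.ext (by simp; omega)
    show φK.symm _ = k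
    rw [h3, Equiv.symm_apply_apply]
  set σ : K → Fin (n+1) := fun k => (hesurj k).choose with hσdef
  have hσ : ∀ k, e (σ k) = k := fun k => (hesurj k).choose_spec
  set D : ZMat n := fun i j => dist (e i) (e j) with hDdef
  have hDA : D ∈ zA n := zA_mem fun i j =>
    ⟨dist_nonneg, le_trans (Metric.dist_le_diam_of_mem Set.finite_univ.isBounded
      (mem_univ _) (mem_univ _)) hdiam⟩
  refine ⟨fun k => (D (σ k), zphi n D), fun k => ?_, fun k k' => ?_⟩
  · exact mem_iUnion.2 ⟨σ k, ⟨(D, zphi n D), subset_closure ⟨D, hDA, rfl⟩, rfl⟩⟩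
  · have hpi : dist (D (σ k)) (D (σ k')) = dist k k' := by
      apply le_antisymm
      · refine (dist_pi_le_iff dist_nonneg).2 fun j => ?_
        rw [Real.dist_eq]
        show |dist (e (σ k)) (e j) - dist (e (σ k')) (e j)| ≤ dist k k'
        rw [hσ k, hσ k']
        exact abs_dist_sub_le k k' (e j)
      · have h5 := dist_le_pi_dist (D (σ k)) (D (σ k')) (σ k')
        have h6 : D (σ k) (σ k') = dist k k' := by
          show dist (e (σ k)) (e (σ k')) = dist k k'
          rw [hσ k, hσ k']
        have h7 : D (σ k') (σ k') = 0 := by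
          show dist (e (σ k')) (e (σ k')) = 0
          exact dist_self _
        rw [Real.dist_eq, h6, h7, sub_zero, abs_of_nonneg dist_nonneg] at h5
        exact h5
    rw [Prod.dist_eq]
    simp only [dist_self, hpi]
    exact max_eq_left dist_nonneg



/-- For each natural number `n`, there exist nonempty compact totally disconnected
(zero-dimensional) metric spaces `E` and `H` and a continuous surjection `f : E → H`
which is isometrically containing for the class of non-expanding surjections between
metric spaces with at most `n` points and diameter at most `1`. -/
theorem zeroDim_isometrically_containing (n : ℕ) :
    ∃ (E H : Type) (_ : MetricSpace E) (_ : MetricSpace H) (f : E → H),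
      Nonempty E ∧ Nonempty H ∧ CompactSpace E ∧ CompactSpace H ∧
      TotallyDisconnectedSpace E ∧ TotallyDisconnectedSpace H ∧
      Continuous f ∧ Function.Surjective f ∧
      ∀ (K L : Type) (_ : MetricSpace K) (_ : MetricSpace L),
        Finite K → Nat.card K ≤ n → Metric.diam (Set.univ : Set K) ≤ 1 →
        Finite L → Nat.card L ≤ n → Metric.diam (Set.univ : Set L) ≤ 1 →
        ∀ g : K → L, Function.Surjective g → LipschitzWith 1 g →
          ∃ (i : K → E) (j : L → H), Isometry i ∧ Isometry j ∧ f ∘ i = j ∘ g := by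

  obtain ⟨x₀, hx₀⟩ := zS_nonempty n
  haveI : Nonempty (zS n) := ⟨⟨x₀, hx₀⟩⟩
  haveI : CompactSpace (zS n) := isCompact_iff_compactSpace.1 (zS_compact n)
  haveI : TotallyDisconnectedSpace (zS n) := totallyDisconnectedSpace_subtype_iff.2 (zS_TD n)
  refine ⟨(zS n) × (zS n), zS n, inferInstance, inferInstance, Prod.fst,
    inferInstance, inferInstance, inferInstance, inferInstance,
    inferInstance, inferInstance, continuous_fst, fun y => ⟨(y, y), rfl⟩, ?_⟩
  intro K L instK instL hKfin hKcard _hKdiam hLfin hLcard hLdiam g hgsurj hglip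
  haveI := hKfin
  haveI := hLfin
  rcases isEmpty_or_nonempty K with hKe | hKne
  · haveI : IsEmpty L := ⟨fun l => by
      obtain ⟨k, -⟩ := hgsurj l
      exact IsEmpty.false k⟩
    exact ⟨fun k => isEmptyElim k, fun l => isEmptyElim l,
      fun k => isEmptyElim k, fun l => isEmptyElim l, funext fun k => isEmptyElim k⟩
  · haveI : Nonempty L := Nonempty.map g hKne
    obtain ⟨ιK, hmemK, hdistK⟩ := zS_embed n K (hKcard.trans (Nat.le_succ n)) _hKdiam
    obtain ⟨ιL, hmemL, hdistL⟩ := zS_embed n L (hLcard.trans (Nat.le_succ n)) hLdiam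
    set jH : L → (zS n : Set _) := fun l => ⟨ιL l, hmemL l⟩ with hjH
    set iH : K → (zS n : Set _) := fun k => ⟨ιK k, hmemK k⟩ with hiH
    refine ⟨fun k => (jH (g k), iH k), jH, ?_, ?_, rfl⟩
    · apply Isometry.of_dist_eq
      intro k k'
      rw [Prod.dist_eq]
      have h1 : dist (jH (g k)) (jH (g k')) = dist (g k) (g k') := by
        rw [Subtype.dist_eq]
        exact hdistL (g k) (g k')
      have h2 : dist (iH k) (iH k') = dist k k' := by
        rw [Subtype.dist_eq]
        exact hdistK k k'
      rw [h1, h2]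
      have h3 : dist (g k) (g k') ≤ dist k k' := by
        have := hglip.dist_le_mul k k'
        simpa using this
      exact max_eq_right h3
    · apply Isometry.of_dist_eq
      intro l l'
      rw [Subtype.dist_eq]
      exact hdistL l l'
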